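/- Define φ_A(π) = 1 - (2/θ)π + (1/(2θ²))π² for θ > 0. Then |φ_A(π)| ≤ 1 for all π ∈ [0,1] if and only if θ ≥ 1/4. -/

import Mathlib

/-- |φ_A(π)| ≤ 1 on [0,1] iff θ ≥ 1/4. -/
theorem stmt_9 (θ : ℝ) (hθ : θ > 0) :
    (∀ π : ℝ, 0 ≤ π → π ≤ 1 →
      |1 - (2/θ) * π + (1/(2*θ^2)) * π^2| ≤ 1) ↔ θ ≥ 1/4 := by
  have hθ' : θ ≠ 0 := ne_of_gt hθ
  constructor
  · intro h
    have h1 := h 1 (by norm_num) le_rfl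
    rw [abs_le] at h1
    obtain ⟨_, h2⟩ := h1
    rw [ge_iff_le]
    field_simp at h2
    nlinarith
  · intro h4 π h0 h1
    rw [abs_le]
    have key : 1 - (2/θ) * π + (1/(2*θ^2)) * π^2
        = (2*θ - π)^2 / (2*θ^2) - 1 := by
      field_simp
      ring
    constructor
    · rw [key]
      have : (0:ℝ) ≤ (2*θ - π)^2 / (2*θ^2) := by positivity
      linarith
    · rw [key, sub_le_iff_le_add, div_le_iff₀ (by positivity)]
      nlinarith
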